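/- For every non-empty closed perfect set H ⊆ [0,1], there exists an atomless Borel probability measure on [0,1] whose support is exactly H. -/

import Mathlib

open Set MeasureTheory Pointwise

abbrev Plane := ℝ × ℝ

/-- An origin-symmetric convex body in the plane: compact, convex,
nonempty interior, symmetric about the origin. -/
def IsSymmConvexBody (K : Set Plane) : Prop :=
  Convex ℝ K ∧ IsCompact K ∧ (interior K).Nonempty ∧ K = -K

/-- Birkhoff orthogonality with respect to the norm induced by `K`
(whose Minkowski functional is `gauge K`). -/
def BOrth (K : Set Plane) (x y : Plane) : Prop :=
  ∀ t : ℝ, gauge K x ≤ gauge K (x + t • y)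

/-- The set of Auerbach points of `K`. -/
def Auerbach (K : Set Plane) : Set Plane :=
  {x | x ∈ frontier K ∧ ∃ y ∈ frontier K, BOrth K x y ∧ BOrth K y x}

/-- `E(K)`: the union of the open non-degenerate segments contained in `∂K`. -/
def SegUnion (K : Set Plane) : Set Plane :=
  {x | ∃ a b : Plane, a ≠ b ∧ segment ℝ a b ⊆ frontier K ∧ x ∈ openSegment ℝ a b}

/-- A closed antipode-free arc of `∂K` with endpoints `x` and `y`:
a closed connected subset of `∂K` containing `x` and `y`, containing no
pair of antipodal points, and minimal with these properties. -/
def IsBArc (K C : Set Plane) (x y : Plane) : Prop :=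
  C ⊆ frontier K ∧ IsClosed C ∧ IsPreconnected C ∧ x ∈ C ∧ y ∈ C ∧
  (∀ z ∈ C, -z ∉ C) ∧
  ∀ C' ⊆ C, IsClosed C' → IsPreconnected C' → x ∈ C' → y ∈ C' → C' = C

/-- An angular measure on `∂K`. -/
def IsAngularMeasure (K : Set Plane) (μ : Measure Plane) : Prop :=
  μ (frontier K) = ENNReal.ofReal (2 * Real.pi) ∧
  μ (frontier K)ᶜ = 0 ∧
  (∀ X : Set Plane, μ (-X) = μ X) ∧
  (∀ x : Plane, μ {x} = 0)

/-- A B-measure: an angular measure giving `π/2` to every closed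
antipode-free arc whose endpoints are Birkhoff orthogonal. -/
def IsBMeasure (K : Set Plane) (μ : Measure Plane) : Prop :=
  IsAngularMeasure K μ ∧
  ∀ C x y, IsBArc K C x y → BOrth K x y → μ C = ENNReal.ofReal (Real.pi / 2)

/-- The support of a Borel measure: the points all of whose open
neighborhoods have positive measure. -/
def msupp {α : Type*} [TopologicalSpace α] [MeasurableSpace α]
    (μ : Measure α) : Set α :=
  {x | ∀ U : Set α, IsOpen U → x ∈ U → 0 < μ U}

open Filter Topology

set_option synthInstance.maxHeartbeats 1000000
set_option maxHeartbeats 1000000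


abbrev CG := ℕ → ZMod 2

lemma cg_nebot : (𝓝[≠] (0 : CG)).NeBot := by
  rw [← mem_closure_iff_nhdsWithin_neBot]
  have h : Tendsto (fun k : ℕ => (fun n => if n = k then (1:ZMod 2) else 0 : CG)) atTop (𝓝 0) := by
    rw [tendsto_pi_nhds]
    intro n
    apply Tendsto.congr' (f₁ := fun _ => (0 : ZMod 2))
    · filter_upwards [eventually_gt_atTop n] with k hk
      simp [Nat.ne_of_lt hk, (Nat.ne_of_lt hk).symm]
    · exact tendsto_const_nhds
  refine mem_closure_of_tendsto h ?_
  filter_upwards with k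
  intro hmem
  have := congrFun (Set.mem_singleton_iff.mp hmem) k
  simp at this

lemma exists_measure_of_perfect (C : Set ℝ) (hC : Perfect C) (hne : C.Nonempty) :
    ∃ μ : Measure ℝ, IsProbabilityMeasure μ ∧ (∀ x, μ {x} = 0) ∧ μ Cᶜ = 0 := by
  obtain ⟨f, hrange, hcont, hinj⟩ := hC.exists_nat_bool_injection hne
  -- the map from the Cantor group to the Cantor space
  let g : CG → (ℕ → Bool) := fun a n => decide (a n = 1)
  have hgcont : Continuous g := by
    refine continuous_pi fun n => ?_
    exact (continuous_of_discreteTopology (α := ZMod 2)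
      (f := fun v => decide (v = 1))).comp (continuous_apply n)
  have hginj : Function.Injective g := by
    intro a b hab
    funext n
    have h := congrFun hab n
    revert h
    show decide (a n = 1) = decide (b n = 1) → a n = b n
    generalize a n = x; generalize b n = y
    revert x y; decide
  haveI : (𝓝[≠] (0 : CG)).NeBot := cg_nebot
  let ν : Measure CG := MeasureTheory.Measure.addHaar
  haveI : IsFiniteMeasure ν := by infer_instance
  haveI : NullSingletonClass ν := MeasureTheory.Measure.IsAddHaarMeasure.nullSingletonClass _
  have hν0 : ν univ ≠ 0 := by
    exact (isOpen_univ.measure_pos ν univ_nonempty).ne'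
  have hνt : ν univ ≠ ⊤ := measure_ne_top ν univ
  let ν' : Measure CG := (ν univ)⁻¹ • ν
  haveI hprob : IsProbabilityMeasure ν' := by
    constructor
    simp only [ν', Measure.smul_apply, smul_eq_mul]
    exact ENNReal.inv_mul_cancel hν0 hνt
  haveI : NullSingletonClass ν' := by
    constructor
    intro x
    simp [ν', measure_singleton]
  have hF : Continuous (f ∘ g) := hcont.comp hgcont
  have hFm : Measurable (f ∘ g) := hF.measurable
  refine ⟨Measure.map (f ∘ g) ν', ?_, ?_, ?_⟩
  · exact Measure.isProbabilityMeasure_map hFm.aemeasurable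
  · intro x
    rw [Measure.map_apply hFm (measurableSet_singleton x)]
    have hsub : ((f ∘ g) ⁻¹' {x}).Subsingleton := fun a ha b hb =>
      (hinj.comp hginj) (ha.trans hb.symm)
    exact hsub.measure_zero ν'
  · rw [Measure.map_apply hFm hC.closed.measurableSet.compl]
    have : (f ∘ g) ⁻¹' Cᶜ = ∅ := by
      ext a
      simp only [Set.mem_preimage, Set.mem_compl_iff, Set.mem_empty_iff_false, iff_false, not_not]
      exact hrange ⟨g a, rfl⟩
    simp [this]

/-- Every nonempty closed perfect subset of `[0,1]` is the support of an
atomless Borel probability measure on `[0,1]`. -/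
theorem stmt_5 (H : Set ℝ) (hH1 : H ⊆ Icc (0:ℝ) 1) (hHne : H.Nonempty)
    (hHperf : Perfect H) :
    ∃ μ : Measure ℝ, IsProbabilityMeasure μ ∧ (∀ x : ℝ, μ {x} = 0) ∧
      μ (Icc (0:ℝ) 1)ᶜ = 0 ∧ msupp μ = H := by
  classical
  set e : ℕ → ℚ × ℚ := fun n => (Denumerable.eqv (ℚ × ℚ)).symm n with he
  have hesurj : Function.Surjective e := (Denumerable.eqv (ℚ × ℚ)).symm.surjective
  have key : ∀ n : ℕ, ∃ μ : Measure ℝ, IsProbabilityMeasure μ ∧ (∀ x, μ {x} = 0) ∧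
      μ Hᶜ = 0 ∧ ((H ∩ Ioo ((e n).1 : ℝ) ((e n).2 : ℝ)).Nonempty →
        μ (Icc ((e n).1 : ℝ) ((e n).2 : ℝ)) = 1) := by
    intro n
    set a : ℝ := ((e n).1 : ℝ)
    set b : ℝ := ((e n).2 : ℝ)
    by_cases h : (H ∩ Ioo a b).Nonempty
    · obtain ⟨x, hxH, hxI⟩ := h
      obtain ⟨hCp, hCne⟩ := hHperf.closure_nhds_inter x hxH hxI isOpen_Ioo
      obtain ⟨μ, h1, h2, h3⟩ := exists_measure_of_perfect _ hCp hCne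
      have hCH : closure (Ioo a b ∩ H) ⊆ H :=
        closure_minimal (inter_subset_right) hHperf.closed
      have hCI : closure (Ioo a b ∩ H) ⊆ Icc a b :=
        closure_minimal (inter_subset_left.trans Ioo_subset_Icc_self) isClosed_Icc
      refine ⟨μ, h1, h2, ?_, fun _ => ?_⟩
      · exact le_antisymm ((measure_mono (compl_subset_compl.mpr hCH)).trans h3.le) bot_le
      · have hc : μ (Icc a b)ᶜ = 0 :=
          le_antisymm ((measure_mono (compl_subset_compl.mpr hCI)).trans h3.le) bot_le
        exact (prob_compl_eq_zero_iff (μ := μ) (measurableSet_Icc (a := a) (b := b))).mp hc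
    · obtain ⟨μ, h1, h2, h3⟩ := exists_measure_of_perfect H hHperf hHne
      exact ⟨μ, h1, h2, h3, fun hcon => absurd hcon h⟩
  choose μs hprob hatom hnull hfull using key
  set w : ℕ → ENNReal := fun n => 2⁻¹ ^ (n + 1) with hw
  have hwpos : ∀ n, w n ≠ 0 := fun n => by
    simp [hw]
  have hwsum : (∑' n, w n) = 1 := by
    have : ∀ n, w n = 2⁻¹ ^ n * 2⁻¹ := fun n => by rw [hw]; ring
    rw [tsum_congr this, ENNReal.tsum_mul_right, ENNReal.tsum_geometric,
      ENNReal.one_sub_inv_two]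
    simp [ENNReal.mul_inv_cancel]
  set μ : Measure ℝ := Measure.sum (fun n => w n • μs n) with hμ
  have happly : ∀ s : Set ℝ, MeasurableSet s → μ s = ∑' n, w n * μs n s := by
    intro s hs
    rw [hμ, Measure.sum_apply _ hs]
    simp [Measure.smul_apply, smul_eq_mul]
  have hHmeas : MeasurableSet H := hHperf.closed.measurableSet
  have hμH : μ Hᶜ = 0 := by
    rw [happly _ hHmeas.compl]
    simp [hnull]
  refine ⟨μ, ?_, ?_, ?_, ?_⟩
  · constructor
    rw [happly _ MeasurableSet.univ]
    simp only [measure_univ, mul_one]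
    exact hwsum
  · intro x
    rw [happly _ (measurableSet_singleton x)]
    simp [hatom]
  · refine le_antisymm (le_trans (measure_mono ?_) hμH.le) bot_le
    exact compl_subset_compl.mpr hH1
  · ext x
    simp only [msupp, Set.mem_setOf_eq]
    constructor
    · intro hx
      by_contra hxH
      have := hx Hᶜ hHperf.closed.isOpen_compl hxH
      rw [hμH] at this
      exact lt_irrefl 0 this
    · intro hxH U hU hxU
      obtain ⟨ε, hε, hball⟩ := Metric.isOpen_iff.mp hU x hxU
      rw [Real.ball_eq_Ioo] at hball
      obtain ⟨q1, hq1, hq1'⟩ := exists_rat_btwn (show x - ε < x by linarith)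
      obtain ⟨q2, hq2, hq2'⟩ := exists_rat_btwn (show x < x + ε by linarith)
      obtain ⟨n, hn⟩ := hesurj (q1, q2)
      have hxIoo : x ∈ Ioo ((e n).1 : ℝ) ((e n).2 : ℝ) := by
        rw [hn]; exact ⟨hq1', hq2⟩
      have h1 := hfull n ⟨x, hxH, hxIoo⟩
      have hIccU : Icc ((e n).1 : ℝ) ((e n).2 : ℝ) ⊆ U := by
        rw [hn]
        refine (Icc_subset_Ioo hq1 hq2').trans hball
      have hμsU : μs n U = 1 := by
        have hle : (1:ENNReal) ≤ μs n U := h1 ▸ measure_mono hIccU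
        exact le_antisymm (prob_le_one) hle
      have : w n * μs n U ≤ μ U := by
        rw [happly _ hU.measurableSet]
        exact ENNReal.le_tsum n
      refine lt_of_lt_of_le ?_ this
      rw [hμsU, mul_one]
      exact pos_iff_ne_zero.mpr (hwpos n)
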